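/- Let T=(V,E) be a finite tree with positive edge weights and let d be the induced shortest-path (tree) metric on V, with |V| ≥ 2. Then there exists an edge e∈E such that the 2-clustering of V given by the vertex sets of the two connected components of T∖e is IP-stable. In particular, every finite tree metric admits an IP-stable 2-clustering with connected (contiguous) clusters. -/

import Mathlib

open Finset

open scoped Classical in
/-- The shortest-path (tree) metric induced on the vertices of a tree `G` with
edge weights `w`: the total weight of the unique path between two vertices. -/
noncomputable def treeDist {V : Type*} (G : SimpleGraph V) (hG : G.IsTree)
    (w : Sym2 V → ℝ) (u v : V) : ℝ :=
  (((hG.existsUnique_path u v).exists.choose).edges.map w).sum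

/-- A point `x` is IP-stable in the clustering `C` w.r.t. dissimilarity `d`. -/
def IPStablePt {α : Type*} [DecidableEq α] (d : α → α → ℝ) {k : ℕ}
    (C : Fin k → Finset α) (x : α) : Prop :=
  ∀ i : Fin k, x ∈ C i →
    (C i = {x} ∨
      ∀ j : Fin k, C j ≠ C i →
        (∑ y ∈ C i, d x y) / ((C i).card - 1 : ℝ) ≤
          (∑ y ∈ C j, d x y) / ((C j).card : ℝ))

/-- `C` is a `k`-clustering of the finite set `D`. -/
def IsClustering {α : Type*} [DecidableEq α] (D : Finset α) {k : ℕ}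
    (C : Fin k → Finset α) : Prop :=
  (∀ i, (C i).Nonempty) ∧ (∀ i j, i ≠ j → Disjoint (C i) (C j)) ∧
    Finset.univ.biUnion C = D


namespace IPTreeAux
set_option linter.unusedSectionVars false

open SimpleGraph

variable {V : Type*} [Fintype V] [DecidableEq V]
variable {G : SimpleGraph V} (hG : G.IsTree) (w : Sym2 V → ℝ)

/-- weight of a walk -/
noncomputable def wt {x y : V} (p : G.Walk x y) : ℝ := (p.edges.map w).sum

noncomputable def thePath (x y : V) : G.Walk x y := (hG.existsUnique_path x y).exists.choose

lemma thePath_isPath (x y : V) : (thePath hG x y).IsPath :=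
  (hG.existsUnique_path x y).exists.choose_spec

lemma thePath_unique {x y : V} (q : G.Walk x y) (hq : q.IsPath) : q = thePath hG x y := by
  have h := hG.existsUnique_path x y
  exact h.unique hq (thePath_isPath hG x y)

lemma treeDist_eq_wt {x y : V} (q : G.Walk x y) (hq : q.IsPath) :
    treeDist G hG w x y = wt w q := by
  rw [treeDist]
  rw [thePath_unique hG q hq]
  rfl

lemma wt_nonneg (hw : ∀ e ∈ G.edgeSet, 0 < w e) {x y : V} (p : G.Walk x y) : 0 ≤ wt w p := by
  apply List.sum_nonneg
  intro a ha
  obtain ⟨e, he, rfl⟩ := List.mem_map.mp ha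
  exact (hw e (p.edges_subset_edgeSet he)).le

lemma treeDist_le_wt (hw : ∀ e ∈ G.edgeSet, 0 < w e) {x y : V} (q : G.Walk x y) : treeDist G hG w x y ≤ wt w q := by
  rw [treeDist_eq_wt hG w q.bypass q.bypass_isPath]
  have hsub : q.bypass.edges.Subperm q.edges :=
    List.Nodup.subperm (q.bypass_isPath.isTrail.edges_nodup) q.edges_bypass_subset
  obtain ⟨l, hp, hs⟩ := hsub
  calc (q.bypass.edges.map w).sum = (l.map w).sum := ((hp.map w).sum_eq).symm
  _ ≤ _ := (hs.map w).sum_le_sum (by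
      intro a ha
      obtain ⟨e, he, rfl⟩ := List.mem_map.mp ha
      exact (hw e (q.edges_subset_edgeSet he)).le)

lemma treeDist_self (x : V) : treeDist G hG w x x = 0 := by
  rw [treeDist_eq_wt hG w (Walk.nil) (by simp)]; simp [wt]

lemma treeDist_nonneg (hw : ∀ e ∈ G.edgeSet, 0 < w e) (x y : V) : 0 ≤ treeDist G hG w x y := by
  rw [treeDist]; exact wt_nonneg w hw (thePath hG x y)

lemma treeDist_symm (x y : V) : treeDist G hG w x y = treeDist G hG w y x := by
  rw [treeDist_eq_wt hG w ((thePath hG x y).reverse) ((thePath_isPath hG x y).reverse)]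
  rw [treeDist, wt, Walk.edges_reverse, List.map_reverse, List.sum_reverse]
  rfl

lemma treeDist_adj {x y : V} (h : G.Adj x y) : treeDist G hG w x y = w s(x, y) := by
  rw [treeDist_eq_wt hG w (Walk.cons h Walk.nil) (by simp [h.ne])]
  simp [wt]

lemma treeDist_triangle (hw : ∀ e ∈ G.edgeSet, 0 < w e) (x z y : V) :
    treeDist G hG w x y ≤ treeDist G hG w x z + treeDist G hG w z y := by
  have := treeDist_le_wt hG w hw ((thePath hG x z).append (thePath hG z y))
  rwa [wt, Walk.edges_append, List.map_append, List.sum_append] at this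


section Components

open scoped Classical in
noncomputable def R (G : SimpleGraph V) (u v : V) : Finset V :=
  Finset.univ.filter fun z => (G.deleteEdges {s(u, v)}).Reachable u z

lemma mem_R_iff {G : SimpleGraph V} {u v z : V} :
    z ∈ R G u v ↔ (G.deleteEdges {s(u, v)}).Reachable u z := by
  simp [R]

lemma deleteEdges_swap (G : SimpleGraph V) (u v : V) :
    G.deleteEdges {s(v, u)} = G.deleteEdges {s(u, v)} := by
  rw [Sym2.eq_swap]

lemma mem_R_iff' {G : SimpleGraph V} {u v z : V} :
    z ∈ R G v u ↔ (G.deleteEdges {s(u, v)}).Reachable v z := by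
  rw [mem_R_iff, deleteEdges_swap]

lemma mem_R_self {G : SimpleGraph V} (u v : V) : u ∈ R G u v :=
  mem_R_iff.mpr (Reachable.refl u)

/-- the deleted edge is a bridge: `u` cannot reach `v` after deletion. -/
lemma not_reachable_del (hG : G.IsTree) {u v : V} (h : G.Adj u v) :
    ¬ (G.deleteEdges {s(u, v)}).Reachable u v := by
  intro hr
  obtain ⟨q⟩ := hr
  have hp : q.bypass.IsPath := SimpleGraph.Walk.bypass_isPath q
  have hedges : ∀ e ∈ q.bypass.edges, e ∈ G.edgeSet := fun e he => by
    have := q.bypass.edges_subset_edgeSet he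
    rw [SimpleGraph.edgeSet_deleteEdges] at this
    exact this.1
  have hnotmem : s(u, v) ∉ q.bypass.edges := fun hmem => by
    have := q.bypass.edges_subset_edgeSet hmem
    rw [SimpleGraph.edgeSet_deleteEdges] at this
    exact this.2 rfl
  have hp' : (q.bypass.transfer G hedges).IsPath := hp.transfer hedges
  have h1 : q.bypass.transfer G hedges = thePath hG u v := thePath_unique hG _ hp'
  have h2 : (Walk.cons h (Walk.nil : G.Walk v v)) = thePath hG u v :=
    thePath_unique hG _ (by simp [h.ne])
  have : s(u, v) ∈ (q.bypass.transfer G hedges).edges := by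
    rw [h1, ← h2]; simp
  rw [SimpleGraph.Walk.edges_transfer] at this
  exact hnotmem this

lemma reach_total (hG : G.IsTree) {u v : V} (h : G.Adj u v) (z : V) : z ∈ R G u v ∨ z ∈ R G v u := by
  rw [mem_R_iff, mem_R_iff']
  set G' := G.deleteEdges {s(u, v)} with hG'
  set p := thePath hG u z with hp
  by_cases he : s(u, v) ∈ p.edges
  · right
    have hv : v ∈ p.support := p.snd_mem_support_of_mem_edges he
    set r := p.dropUntil v hv with hr
    have hnotin : ∀ e ∈ r.edges, e ∉ ({s(u, v)} : Set (Sym2 V)) := by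
      intro e her hmem
      rw [Set.mem_singleton_iff] at hmem
      subst hmem
      have hu : u ∈ r.support := r.fst_mem_support_of_mem_edges her
      -- u appears in the takeUntil part (as its start) and in r; contradiction with nodup
      have hnd : p.support.Nodup := (thePath_isPath hG u z).support_nodup
      have hspec := p.take_spec hv
      have : p.support = (p.takeUntil v hv).support ++ r.support.tail := by
        conv_lhs => rw [← hspec]
        rw [SimpleGraph.Walk.support_append]
      rw [this] at hnd
      have hdisj := List.disjoint_of_nodup_append hnd
      have hu1 : u ∈ (p.takeUntil v hv).support := (p.takeUntil v hv).start_mem_support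
      have hu2 : u ∈ r.support.tail := by
        rw [r.support_eq_cons] at hu
        rcases List.mem_cons.mp hu with h1 | h1
        · exact absurd h1 h.ne
        · exact h1
      exact hdisj hu1 hu2
    exact ⟨r.toDeleteEdges _ hnotin⟩
  · left
    have hnotin : ∀ e ∈ p.edges, e ∉ ({s(u, v)} : Set (Sym2 V)) := by
      intro e hep hmem
      rw [Set.mem_singleton_iff] at hmem; subst hmem; exact he hep
    exact ⟨p.toDeleteEdges _ hnotin⟩


lemma R_disjoint (hG : G.IsTree) {u v : V} (h : G.Adj u v) :
    Disjoint (R G u v) (R G v u) := by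
  rw [Finset.disjoint_left]
  intro z hz1 hz2
  rw [mem_R_iff] at hz1
  rw [mem_R_iff'] at hz2
  exact not_reachable_del hG h (hz1.trans hz2.symm)

lemma support_reach {H : SimpleGraph V} {x y z : V} (q : H.Walk x y) (hz : z ∈ q.support) :
    H.Reachable x z := ⟨q.takeUntil z hz⟩

lemma exists_del_path (hG : G.IsTree) (s : Set (Sym2 V)) {x y : V}
    (hr : (G.deleteEdges s).Reachable x y) :
    ∃ q : (G.deleteEdges s).Walk x y, q.IsPath ∧
      treeDist G hG w x y = (q.edges.map w).sum := by
  obtain ⟨q0⟩ := hr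
  have hedges : ∀ e ∈ q0.bypass.edges, e ∈ G.edgeSet := fun e he => by
    have := q0.bypass.edges_subset_edgeSet he
    rw [SimpleGraph.edgeSet_deleteEdges] at this
    exact this.1
  refine ⟨q0.bypass, q0.bypass_isPath, ?_⟩
  rw [treeDist_eq_wt hG w (q0.bypass.transfer G hedges) (q0.bypass_isPath.transfer hedges)]
  rw [wt, SimpleGraph.Walk.edges_transfer]

lemma dist_cross (hG : G.IsTree) {u v x y : V} (h : G.Adj u v)
    (hx : x ∈ R G u v) (hy : y ∈ R G v u) :
    treeDist G hG w x y = treeDist G hG w x u + w s(u, v) + treeDist G hG w v y := by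
  rw [mem_R_iff] at hx
  rw [mem_R_iff'] at hy
  obtain ⟨p, hp, hpd⟩ := exists_del_path w hG {s(u, v)} hx.symm
  obtain ⟨q, hq, hqd⟩ := exists_del_path w hG {s(u, v)} hy
  have hpe : ∀ e ∈ p.edges, e ∈ G.edgeSet := fun e he => by
    have := p.edges_subset_edgeSet he
    rw [SimpleGraph.edgeSet_deleteEdges] at this; exact this.1
  have hqe : ∀ e ∈ q.edges, e ∈ G.edgeSet := fun e he => by
    have := q.edges_subset_edgeSet he
    rw [SimpleGraph.edgeSet_deleteEdges] at this; exact this.1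
  set p' := p.transfer G hpe with hp'
  set q' := q.transfer G hqe with hq'
  set W : G.Walk x y := p'.append (SimpleGraph.Walk.cons h q') with hW
  have hWsupp : W.support = p.support ++ q.support := by
    rw [hW, SimpleGraph.Walk.support_append, SimpleGraph.Walk.support_cons, List.tail_cons,
      SimpleGraph.Walk.support_transfer, SimpleGraph.Walk.support_transfer]
  have hpsub : ∀ z ∈ p.support, z ∈ R G u v := fun z hz =>
    mem_R_iff.mpr (hx.trans (support_reach p hz))
  have hqsub : ∀ z ∈ q.support, z ∈ R G v u := fun z hz =>
    mem_R_iff'.mpr (support_reach q hz)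
  have hWpath : W.IsPath := by
    rw [SimpleGraph.Walk.isPath_def, hWsupp]
    refine List.Nodup.append hp.support_nodup hq.support_nodup ?_
    intro a ha hb
    exact (Finset.disjoint_left.mp (R_disjoint hG h)) (hpsub a ha) (hqsub a hb)
  have := treeDist_eq_wt hG w W hWpath
  rw [this, wt, hW, SimpleGraph.Walk.edges_append, SimpleGraph.Walk.edges_cons,
    SimpleGraph.Walk.edges_transfer, SimpleGraph.Walk.edges_transfer, List.map_append,
    List.sum_append, List.map_cons, List.sum_cons, hpd, hqd]
  ring


lemma reach_del_of_not_mem {e₁ : Sym2 V} {a z x y : V}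
    (h : (G.deleteEdges {e₁}).Reachable a z)
    (hx : ¬ (G.deleteEdges {e₁}).Reachable a x) :
    (G.deleteEdges {s(x, y)}).Reachable a z := by
  obtain ⟨q⟩ := h
  have hxs : x ∉ q.support := fun hmem => hx (support_reach q hmem)
  have hedges : ∀ e ∈ q.edges, e ∈ G.edgeSet := fun e he => by
    have := q.edges_subset_edgeSet he
    rw [SimpleGraph.edgeSet_deleteEdges] at this; exact this.1
  refine ⟨(q.transfer G hedges).toDeleteEdges _ ?_⟩
  intro e he hm
  rw [Set.mem_singleton_iff] at hm; subst hm
  rw [SimpleGraph.Walk.edges_transfer] at he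
  exact hxs (q.fst_mem_support_of_mem_edges he)

/-- a branch at `u` (through neighbour `u'` distinct from `v`) is inside
`R G u v` and avoids `u`. -/
lemma branch_subset (hG : G.IsTree) {u v u' : V} (h : G.Adj u v) (h' : G.Adj u u')
    (hne : u' ≠ v) : R G u' u ⊆ (R G u v).erase u := by
  intro z hz
  have hu_not : u ∉ R G u' u := by
    intro hu
    exact (Finset.disjoint_left.mp (R_disjoint hG h'.symm)) hu (mem_R_self u u')
  rw [Finset.mem_erase]
  constructor
  · rintro rfl; exact hu_not hz
  · rw [mem_R_iff] at hz ⊢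
    have hnr : ¬ (G.deleteEdges {s(u', u)}).Reachable u' u := fun hr => hu_not (mem_R_iff.mpr hr)
    have h1 : (G.deleteEdges {s(u, v)}).Reachable u' z := reach_del_of_not_mem hz hnr
    have h2 : (G.deleteEdges {s(u, v)}).Adj u u' := by
      rw [SimpleGraph.deleteEdges_adj]
      refine ⟨h', ?_⟩
      rw [Set.mem_singleton_iff]
      intro hcontra
      exact hne (Sym2.congr_right.mp hcontra)
    exact h2.reachable.trans h1

lemma branch_disjoint (hG : G.IsTree) {u u' u'' : V} (h' : G.Adj u u') (h'' : G.Adj u u'')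
    (hne : u' ≠ u'') : Disjoint (R G u' u) (R G u'' u) := by
  rw [Finset.disjoint_left]
  intro z hz1 hz2
  have hu_not : u ∉ R G u' u := fun hu =>
    (Finset.disjoint_left.mp (R_disjoint hG h'.symm)) hu (mem_R_self u u')
  have hnr : ¬ (G.deleteEdges {s(u', u)}).Reachable u' u := fun hr => hu_not (mem_R_iff.mpr hr)
  rw [mem_R_iff] at hz1 hz2
  rw [deleteEdges_swap] at hz2
  have h1 : (G.deleteEdges {s(u, u'')}).Reachable u' z := reach_del_of_not_mem hz1 hnr
  have h2 : (G.deleteEdges {s(u, u'')}).Reachable u' u'' := h1.trans hz2.symm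
  have h3 : (G.deleteEdges {s(u, u'')}).Adj u u' := by
    rw [SimpleGraph.deleteEdges_adj]
    refine ⟨h', ?_⟩
    rw [Set.mem_singleton_iff]
    intro hcontra
    rw [Sym2.eq_iff] at hcontra
    rcases hcontra with ⟨_, h5⟩ | ⟨h4, h5⟩
    · exact hne h5
    · exact G.loopless.irrefl u (h5 ▸ h')
  exact not_reachable_del hG h'' (h3.reachable.trans h2)

lemma branch_cover (hG : G.IsTree) {u v z : V} (h : G.Adj u v)
    (hz : z ∈ (R G u v).erase u) :
    ∃ u', G.Adj u u' ∧ u' ≠ v ∧ z ∈ R G u' u := by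
  rw [Finset.mem_erase] at hz
  obtain ⟨hzu, hzR⟩ := hz
  rw [mem_R_iff] at hzR
  obtain ⟨q0⟩ := hzR
  have hq : q0.bypass.IsPath := q0.bypass_isPath
  set p := q0.bypass with hpdef
  clear_value p
  cases p with
  | nil => exact absurd rfl hzu.symm
  | @cons _ w' _ hadj q =>
    rename_i foo

    have huv : G.Adj u w' ∧ s(u, w') ∉ ({s(u, v)} : Set (Sym2 V)) :=
      SimpleGraph.deleteEdges_adj.mp hadj
    have hwv : w' ≠ v := by
      intro hcontra; subst hcontra
      exact huv.2 rfl
    refine ⟨w', huv.1, hwv, ?_⟩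
    rw [mem_R_iff]
    have hu_not : u ∉ q.support := by
      have := hq.support_nodup
      rw [SimpleGraph.Walk.support_cons] at this
      exact (List.nodup_cons.mp this).1
    have hedges : ∀ e ∈ q.edges, e ∈ G.edgeSet := fun e he => by
      have := q.edges_subset_edgeSet he
      rw [SimpleGraph.edgeSet_deleteEdges] at this; exact this.1
    refine ⟨(q.transfer G hedges).toDeleteEdges _ ?_⟩
    intro e he hm
    rw [Set.mem_singleton_iff] at hm; subst hm
    rw [SimpleGraph.Walk.edges_transfer] at he
    exact hu_not (q.snd_mem_support_of_mem_edges he)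

lemma R_partition (hG : G.IsTree) {u v : V} (h : G.Adj u v) :
    R G u v ∪ R G v u = Finset.univ ∧ Disjoint (R G u v) (R G v u) := by
  refine ⟨?_, R_disjoint hG h⟩
  ext z
  simp only [Finset.mem_union, Finset.mem_univ, iff_true]
  exact reach_total hG h z

lemma R_card_add (hG : G.IsTree) {u v : V} (h : G.Adj u v) :
    (R G u v).card + (R G v u).card = Fintype.card V := by
  obtain ⟨hu, hd⟩ := R_partition hG h
  rw [← Finset.card_union_of_disjoint hd, hu, Finset.card_univ]

lemma R_sum_add (hG : G.IsTree) {u v : V} (h : G.Adj u v) (f : V → ℝ) :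
    ∑ y ∈ R G u v, f y + ∑ y ∈ R G v u, f y = ∑ y : V, f y := by
  obtain ⟨hu, hd⟩ := R_partition hG h
  rw [← Finset.sum_union hd, hu]


section Cond

variable (hG : G.IsTree) (w : Sym2 V → ℝ)

/-- sum of distances from `u` to the vertices on its own side -/
noncomputable def F (u v : V) : ℝ := ∑ y ∈ R G u v, treeDist G hG w u y

/-- the side of `u` satisfies the (cleared-denominator) IP-stability condition. -/
def Cond (u v : V) : Prop :=
  ((R G v u).card : ℝ) * F hG w u v ≤
    (((R G u v).card : ℝ) - 1) * (((R G v u).card : ℝ) * w s(u, v) + F hG w v u)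

lemma R_card_pos (u v : V) : 0 < (R G u v).card :=
  Finset.card_pos.mpr ⟨u, mem_R_self u v⟩

lemma cond_of_card_one {u v : V} (h1 : (R G u v).card = 1) : Cond hG w u v := by
  have : R G u v = {u} := by
    obtain ⟨a, ha⟩ := Finset.card_eq_one.mp h1
    rw [ha]
    have := mem_R_self (G := G) u v
    rw [ha, Finset.mem_singleton] at this
    rw [this]
  unfold Cond F
  rw [this]
  simp [treeDist_self hG w]

lemma cross_sum (hw : ∀ e ∈ G.edgeSet, 0 < w e) {u v x : V} (h : G.Adj u v)
    (hx : x ∈ R G u v) :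
    ∑ y ∈ R G v u, treeDist G hG w x y =
      ((R G v u).card : ℝ) * (treeDist G hG w x u + w s(u, v)) + F hG w v u := by
  unfold F
  have : ∀ y ∈ R G v u, treeDist G hG w x y =
      (treeDist G hG w x u + w s(u, v)) + treeDist G hG w v y := by
    intro y hy
    rw [dist_cross w hG h hx hy]
  rw [Finset.sum_congr rfl this, Finset.sum_add_distrib, Finset.sum_const, nsmul_eq_mul]


open scoped Classical in
lemma key (hw : ∀ e ∈ G.edgeSet, 0 < w e) {u v : V} (h : G.Adj u v)
    (hnc : ¬ Cond hG w u v) :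
    ∃ u', G.Adj u u' ∧ (R G u' u).card < (R G u v).card ∧ Cond hG w u u' := by
  -- the component of `u` has at least two vertices
  have a2 : 2 ≤ (R G u v).card := by
    rcases Nat.lt_or_ge (R G u v).card 2 with hlt | hge
    · have h1 := R_card_pos (G := G) u v
      have h2 : (R G u v).card = 1 := by omega
      exact absurd (cond_of_card_one hG w h2) hnc
    · exact hge
  set NS : Finset V := Finset.univ.filter (fun z => G.Adj u z ∧ z ≠ v) with hNS
  have hbi : (R G u v).erase u = NS.biUnion (fun u' => R G u' u) := by
    ext z
    constructor
    · intro hz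
      obtain ⟨u', h1, h2, h3⟩ := branch_cover hG h hz
      exact Finset.mem_biUnion.mpr ⟨u', by simp [hNS, h1, h2], h3⟩
    · intro hz
      obtain ⟨u', hu', hz'⟩ := Finset.mem_biUnion.mp hz
      rw [hNS, Finset.mem_filter] at hu'
      exact branch_subset hG h hu'.2.1 hu'.2.2 hz'
  have hdisjNS : ∀ x ∈ NS, ∀ y ∈ NS, x ≠ y →
      Disjoint (R G x u) (R G y u) := by
    intro x hx y hy hxy
    rw [hNS, Finset.mem_filter] at hx hy
    exact branch_disjoint hG hx.2.1 hy.2.1 hxy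
  have hNSne : NS.Nonempty := by
    have h1 : ((R G u v).erase u).Nonempty := by
      rw [← Finset.card_pos, Finset.card_erase_of_mem (mem_R_self u v)]
      omega
    obtain ⟨z, hz⟩ := h1
    rw [hbi] at hz
    obtain ⟨u', hu', _⟩ := Finset.mem_biUnion.mp hz
    exact ⟨u', hu'⟩
  set m : V → ℝ := fun u' => ((R G u' u).card : ℝ) with hm
  set g : V → ℝ := fun u' => w s(u, u') + F hG w u' u / m u' with hg
  obtain ⟨I, hIN, hImax⟩ := NS.exists_max_image g hNSne
  have hIfilter := Finset.mem_filter.mp (hNS ▸ hIN)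
  have hIadj : G.Adj u I := hIfilter.2.1
  have hInv : I ≠ v := hIfilter.2.2
  have hm_pos : ∀ u', 0 < m u' := fun u' => by
    show (0 : ℝ) < ((R G u' u).card : ℝ)
    exact_mod_cast R_card_pos (G := G) u' u
  -- per-branch sums
  have hbranch : ∀ u' ∈ NS, ∑ y ∈ R G u' u, treeDist G hG w u y = m u' * g u' := by
    intro u' hu'
    have hadj' : G.Adj u u' := (Finset.mem_filter.mp (hNS ▸ hu')).2.1
    have hcs := cross_sum hG w hw hadj' (mem_R_self u u')
    rw [hcs, treeDist_self hG w]
    show ((R G u' u).card : ℝ) * (0 + w s(u, u')) + F hG w u' u =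
      m u' * (w s(u, u') + F hG w u' u / m u')
    have hmne : m u' ≠ 0 := ne_of_gt (hm_pos u')
    field_simp
    ring
  -- decomposition of F u v
  have hF : F hG w u v = ∑ u' ∈ NS, m u' * g u' := by
    unfold F
    rw [← Finset.sum_erase_add _ _ (mem_R_self u v), treeDist_self hG w, add_zero, hbi,
      Finset.sum_biUnion hdisjNS]
    exact Finset.sum_congr rfl hbranch
  -- card decomposition
  have hcard : ((R G u v).card : ℝ) - 1 = ∑ u' ∈ NS, m u' := by
    have h1 : ((R G u v).erase u).card = (R G u v).card - 1 :=
      Finset.card_erase_of_mem (mem_R_self u v)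
    rw [hbi, Finset.card_biUnion hdisjNS] at h1
    have h2 : (1 : ℕ) ≤ (R G u v).card := R_card_pos u v
    have : ((∑ u' ∈ NS, (R G u' u).card : ℕ) : ℝ) = ((R G u v).card : ℝ) - 1 := by
      rw [h1]
      push_cast [h2]
      ring
    rw [← this]
    push_cast
    rfl
  set a : ℝ := ((R G u v).card : ℝ) with ha
  set b : ℝ := ((R G v u).card : ℝ) with hb
  have ha2 : (2 : ℝ) ≤ a := by rw [ha]; exact_mod_cast a2
  have hb1 : (1 : ℝ) ≤ b := by
    rw [hb]
    have := R_card_pos (G := G) v u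
    exact_mod_cast this
  have hnc' : (a - 1) * (b * w s(u, v) + F hG w v u) < b * F hG w u v := by
    rw [Cond] at hnc
    push_neg at hnc
    exact hnc
  -- D1
  have hD1 : F hG w u v ≤ (a - 1) * g I := by
    rw [hF, hcard, Finset.sum_mul]
    refine Finset.sum_le_sum ?_
    intro u' hu'
    exact mul_le_mul_of_nonneg_left (hImax u' hu') (hm_pos u').le
  -- D2
  have hD2 : b * w s(u, v) + F hG w v u ≤ b * g I := by
    have h1 : (a - 1) * (b * w s(u, v) + F hG w v u) < (a - 1) * (b * g I) := by
      calc (a - 1) * (b * w s(u, v) + F hG w v u) < b * F hG w u v := hnc'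
      _ ≤ b * ((a - 1) * g I) := by
          apply mul_le_mul_of_nonneg_left hD1; linarith
      _ = (a - 1) * (b * g I) := by ring
    have := lt_of_mul_lt_mul_left h1 (by linarith : (0 : ℝ) ≤ a - 1)
    exact this.le
  -- D3
  have hD3 : F hG w u v - m I * g I ≤ ((a - 1) - m I) * g I := by
    have h1 : F hG w u v = m I * g I + ∑ u' ∈ NS.erase I, m u' * g u' := by
      rw [hF, ← Finset.add_sum_erase _ _ hIN]
    have h2 : ∑ u' ∈ NS.erase I, m u' * g u' ≤ (∑ u' ∈ NS.erase I, m u') * g I := by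
      rw [Finset.sum_mul]
      refine Finset.sum_le_sum ?_
      intro u' hu'
      exact mul_le_mul_of_nonneg_left (hImax u' (Finset.mem_of_mem_erase hu')) (hm_pos u').le
    have h3 : ∑ u' ∈ NS.erase I, m u' = (a - 1) - m I := by
      rw [hcard, ← Finset.add_sum_erase _ _ hIN]
      ring
    rw [h3] at h2
    rw [h1]
    linarith
  -- total sum over all vertices, and the sum over the new far side
  have hIbranch : ∑ y ∈ R G I u, treeDist G hG w u y = m I * g I := hbranch I hIN
  have htotal : ∑ y : V, treeDist G hG w u y =
      F hG w u v + (b * w s(u, v) + F hG w v u) := by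
    rw [← R_sum_add hG h (treeDist G hG w u)]
    have hcs := cross_sum hG w hw h (mem_R_self u v)
    rw [hcs, treeDist_self hG w, zero_add]
    rfl
  have hFuI : F hG w u I = (F hG w u v + (b * w s(u, v) + F hG w v u)) - m I * g I := by
    have hsum := R_sum_add hG hIadj (treeDist G hG w u)
    rw [hIbranch, htotal] at hsum
    have hrfl : F hG w u I = ∑ y ∈ R G u I, treeDist G hG w u y := rfl
    rw [hrfl]
    linarith
  have hcardI : ((R G u I).card : ℝ) = (a + b) - m I := by
    have h1 := R_card_add hG hIadj
    have h2 := R_card_add hG h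
    have : (R G u I).card + (R G I u).card = (R G u v).card + (R G v u).card := by
      rw [h1, h2]
    have h3 : (((R G u I).card + (R G I u).card : ℕ) : ℝ) =
        (((R G u v).card + (R G v u).card : ℕ) : ℝ) := by exact_mod_cast this
    push_cast at h3
    show ((R G u I).card : ℝ) = a + b - m I
    rw [ha, hb]
    have hmI : m I = ((R G I u).card : ℝ) := rfl
    rw [hmI]
    linarith
  -- conclude
  refine ⟨I, hIadj, ?_, ?_⟩
  · have hsub := branch_subset hG h hIadj hInv
    calc (R G I u).card ≤ ((R G u v).erase u).card := Finset.card_le_card hsub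
    _ < (R G u v).card := by
        rw [Finset.card_erase_of_mem (mem_R_self u v)]
        omega
  · rw [Cond, hcardI]
    have hgm : ((R G I u).card : ℝ) * w s(u, I) + F hG w I u = m I * g I := by
      have hmne : m I ≠ 0 := ne_of_gt (hm_pos I)
      show m I * w s(u, I) + F hG w I u = m I * (w s(u, I) + F hG w I u / m I)
      field_simp
    have hmIc : ((R G I u).card : ℝ) = m I := rfl
    rw [hgm, hmIc, hFuI]
    have hkey : (F hG w u v + (b * w s(u, v) + F hG w v u)) - m I * g I ≤
        ((a + b) - m I - 1) * g I := by
      have := add_le_add hD3 hD2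
      calc (F hG w u v + (b * w s(u, v) + F hG w v u)) - m I * g I
          = (F hG w u v - m I * g I) + (b * w s(u, v) + F hG w v u) := by ring
      _ ≤ ((a - 1) - m I) * g I + b * g I := add_le_add hD3 hD2
      _ = ((a + b) - m I - 1) * g I := by ring
    calc m I * ((F hG w u v + (b * w s(u, v) + F hG w v u)) - m I * g I)
        ≤ m I * (((a + b) - m I - 1) * g I) :=
          mul_le_mul_of_nonneg_left hkey (hm_pos I).le
    _ = ((a + b) - m I - 1) * (m I * g I) := by ring

lemma main_ind (hw : ∀ e ∈ G.edgeSet, 0 < w e) :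
    ∀ N : ℕ, ∀ u v : V, G.Adj u v → (R G v u).card ≤ N → Cond hG w u v →
    ∃ x y : V, G.Adj x y ∧ Cond hG w x y ∧ Cond hG w y x := by
  intro N
  induction N with
  | zero =>
    intro u v h hle _
    have := R_card_pos (G := G) v u
    omega
  | succ N ih =>
    intro u v h hle hc
    by_cases h2 : Cond hG w v u
    · exact ⟨u, v, h, hc, h2⟩
    · obtain ⟨v', hadj', hcard', hc'⟩ := key hG w hw h.symm h2
      exact ih v v' hadj' (by omega) hc'

lemma exists_good_edge (hw : ∀ e ∈ G.edgeSet, 0 < w e) {u0 v0 : V} (h0 : G.Adj u0 v0) :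
    ∃ x y : V, G.Adj x y ∧ Cond hG w x y ∧ Cond hG w y x := by
  by_cases hc : Cond hG w u0 v0
  · exact main_ind hG w hw (R G v0 u0).card u0 v0 h0 le_rfl hc
  · obtain ⟨u', hadj', _, hc'⟩ := key hG w hw h0 hc
    exact main_ind hG w hw (R G u' u0).card u0 u' hadj' le_rfl hc'

lemma stable_side (hw : ∀ e ∈ G.edgeSet, 0 < w e) {u v x : V} (h : G.Adj u v)
    (hc : Cond hG w u v) (hx : x ∈ R G u v) (hne : R G u v ≠ {x}) :
    (∑ y ∈ R G u v, treeDist G hG w x y) / (((R G u v).card : ℝ) - 1) ≤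
      (∑ y ∈ R G v u, treeDist G hG w x y) / (((R G v u).card : ℝ)) := by
  have a2 : 2 ≤ (R G u v).card := by
    rcases Nat.lt_or_ge (R G u v).card 2 with hlt | hge
    · have h1 := R_card_pos (G := G) u v
      have h2 : (R G u v).card = 1 := by omega
      obtain ⟨z, hz⟩ := Finset.card_eq_one.mp h2
      rw [hz] at hx
      rw [Finset.mem_singleton] at hx
      exact absurd (hz.trans (by rw [hx])) hne
    · exact hge
  have hb1 : 1 ≤ (R G v u).card := R_card_pos v u
  have hSB := cross_sum hG w hw h hx
  have hdxu : 0 ≤ treeDist G hG w x u := treeDist_nonneg hG w hw x u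
  have hSA : ∑ y ∈ R G u v, treeDist G hG w x y ≤
      (((R G u v).card : ℝ) - 1) * treeDist G hG w x u + F hG w u v := by
    have h1 : ∑ y ∈ R G u v, treeDist G hG w x y =
        ∑ y ∈ (R G u v).erase x, treeDist G hG w x y := by
      rw [← Finset.sum_erase_add _ _ hx, treeDist_self hG w, add_zero]
    have h2 : ∀ y ∈ (R G u v).erase x,
        treeDist G hG w x y ≤ treeDist G hG w x u + treeDist G hG w u y := fun y _ =>
      treeDist_triangle hG w hw x u y
    have h3 : ∑ y ∈ (R G u v).erase x, (treeDist G hG w x u + treeDist G hG w u y) =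
        (((R G u v).erase x).card : ℝ) * treeDist G hG w x u +
          ∑ y ∈ (R G u v).erase x, treeDist G hG w u y := by
      rw [Finset.sum_add_distrib, Finset.sum_const, nsmul_eq_mul]
    have h4 : ∑ y ∈ (R G u v).erase x, treeDist G hG w u y ≤ F hG w u v := by
      refine Finset.sum_le_sum_of_subset_of_nonneg (Finset.erase_subset _ _) ?_
      intro y _ _
      exact treeDist_nonneg hG w hw u y
    have h5 : (((R G u v).erase x).card : ℝ) = ((R G u v).card : ℝ) - 1 := by
      rw [Finset.card_erase_of_mem hx]
      have := R_card_pos (G := G) u v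
      push_cast [this]
      ring
    calc ∑ y ∈ R G u v, treeDist G hG w x y
        = ∑ y ∈ (R G u v).erase x, treeDist G hG w x y := h1
    _ ≤ ∑ y ∈ (R G u v).erase x, (treeDist G hG w x u + treeDist G hG w u y) :=
        Finset.sum_le_sum h2
    _ = (((R G u v).erase x).card : ℝ) * treeDist G hG w x u +
          ∑ y ∈ (R G u v).erase x, treeDist G hG w u y := h3
    _ ≤ (((R G u v).card : ℝ) - 1) * treeDist G hG w x u + F hG w u v := by
        rw [h5]
        exact add_le_add le_rfl h4
  have ha2 : (2 : ℝ) ≤ ((R G u v).card : ℝ) := by exact_mod_cast a2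
  have hb1' : (1 : ℝ) ≤ ((R G v u).card : ℝ) := by exact_mod_cast hb1
  rw [div_le_div_iff₀ (by linarith) (by linarith)]
  rw [Cond] at hc
  rw [hSB]
  nlinarith [mul_le_mul_of_nonneg_right hSA
    (by linarith : (0 : ℝ) ≤ ((R G v u).card : ℝ)), hc, hdxu]

end Cond

end Components

end IPTreeAux

open IPTreeAux in
open scoped Classical in
/-- every finite tree with positive edge weights (at least two
vertices) admits an edge whose removal yields an IP-stable 2-clustering of the
vertices by connected components; in particular every finite tree metric admits
an IP-stable 2-clustering with connected clusters. -/
theorem ip_stable_two_clustering_exists_on_tree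
    {V : Type*} [Fintype V] [DecidableEq V]
    (G : SimpleGraph V) (hG : G.IsTree) (hV : 2 ≤ Fintype.card V)
    (w : Sym2 V → ℝ) (hw : ∀ e ∈ G.edgeSet, 0 < w e) :
    ∃ u v : V, G.Adj u v ∧
      IsClustering Finset.univ
        ![Finset.univ.filter fun z => (G.deleteEdges {s(u, v)}).Reachable u z,
          Finset.univ.filter fun z => (G.deleteEdges {s(u, v)}).Reachable v z] ∧
      ∀ x : V, IPStablePt (treeDist G hG w)
        ![Finset.univ.filter fun z => (G.deleteEdges {s(u, v)}).Reachable u z,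
          Finset.univ.filter fun z => (G.deleteEdges {s(u, v)}).Reachable v z] x := by
  -- find an adjacent pair
  obtain ⟨x0, y0, hxy0⟩ := Fintype.exists_pair_of_one_lt_card (by omega) (α := V)
  have hreach : G.Reachable x0 y0 := hG.isConnected.preconnected x0 y0
  obtain ⟨p0⟩ := hreach
  have hadj0 : ∃ a b : V, G.Adj a b := by
    cases p0 with
    | nil => exact absurd rfl hxy0
    | cons hadj q => exact ⟨_, _, hadj⟩
  obtain ⟨a0, b0, hab0⟩ := hadj0
  obtain ⟨u, v, hadj, hc1, hc2⟩ := exists_good_edge hG w hw hab0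
  have hA : (Finset.univ.filter fun z => (G.deleteEdges {s(u, v)}).Reachable u z) = R G u v :=
    rfl
  have hB : (Finset.univ.filter fun z => (G.deleteEdges {s(u, v)}).Reachable v z) = R G v u := by
    rw [R, Sym2.eq_swap]
  have hmA : ∀ P : Finset V → Prop, P (R G u v) → P
      (![Finset.univ.filter fun z => (G.deleteEdges {s(u, v)}).Reachable u z,
          Finset.univ.filter fun z => (G.deleteEdges {s(u, v)}).Reachable v z] 0) := by
    intro P hP
    rwa [Matrix.cons_val_zero, hA]
  refine ⟨u, v, hadj, ⟨?_, ?_, ?_⟩, ?_⟩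
  · intro i
    fin_cases i
    · simp only [Fin.zero_eta, Matrix.cons_val_zero]
      exact ⟨u, hA ▸ mem_R_self u v⟩
    · simp only [Fin.mk_one, Matrix.cons_val_one, Matrix.head_cons]
      exact ⟨v, hB ▸ mem_R_self v u⟩
  · intro i j hij
    fin_cases i <;> fin_cases j
    · exact absurd rfl hij
    · simp only [Fin.zero_eta, Fin.mk_one, Matrix.cons_val_zero, Matrix.cons_val_one,
        Matrix.head_cons, hA, hB]
      exact R_disjoint hG hadj
    · simp only [Fin.zero_eta, Fin.mk_one, Matrix.cons_val_zero, Matrix.cons_val_one,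
        Matrix.head_cons, hA, hB]
      exact (R_disjoint hG hadj).symm
    · exact absurd rfl hij
  · ext z
    simp only [Finset.mem_biUnion, Finset.mem_univ, iff_true]
    rcases reach_total hG hadj z with hz | hz
    · exact ⟨0, trivial, by rw [Matrix.cons_val_zero, hA]; exact hz⟩
    · exact ⟨1, trivial, by rw [Matrix.cons_val_one, Matrix.cons_val_zero, hB]; exact hz⟩
  · intro x i hxi
    fin_cases i
    · simp only [Fin.zero_eta, Matrix.cons_val_zero, hA] at hxi ⊢
      by_cases hsing : R G u v = {x}
      · exact Or.inl hsing
      · refine Or.inr ?_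
        intro j hj
        fin_cases j
        · simp only [Fin.zero_eta, Matrix.cons_val_zero, hA] at hj
          exact absurd rfl hj
        · simp only [Fin.zero_eta, Fin.mk_one, Matrix.cons_val_zero, Matrix.cons_val_one,
            Matrix.head_cons, hA, hB]
          exact stable_side hG w hw hadj hc1 hxi hsing
    · simp only [Fin.mk_one, Matrix.cons_val_one, Matrix.head_cons, hB] at hxi ⊢
      by_cases hsing : R G v u = {x}
      · exact Or.inl hsing
      · refine Or.inr ?_
        intro j hj
        fin_cases j
        · simp only [Fin.zero_eta, Fin.mk_one, Matrix.cons_val_zero, Matrix.cons_val_one,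
            Matrix.head_cons, hA, hB]
          exact stable_side hG w hw hadj.symm hc2 hxi hsing
        · simp only [Fin.mk_one, Matrix.cons_val_one, Matrix.head_cons, hB] at hj
          exact absurd rfl hj
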